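/- arXiv:2508.20761 — 2 statements merged into one kernel-verified Lean document; each statement's English description precedes it below -/
import Mathlib

section
/- Matrix Jensen inequality implying ECRB ⪰ BCRB: Let (Ω, 𝓕, P) be a probability space and J : Ω → Matrix(n,n,ℂ) a measurable random Hermitian matrix such that J(ω) is positive definite almost surely, and both J and J(ω)^{-1} have entrywise integrable entries. Then E[J] is positive definite, and the matrix E[J^{-1}] − (E[J])^{-1} is positive semidefinite; i.e. the expected inverse Fisher information matrix (ECRB) dominates the inverse of the expected Fisher information matrix (BCRB) in the Loewner order. -/
open MeasureTheory
open scoped ComplexOrder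
open Matrix

section Helpers
variable {Ω : Type*} [MeasurableSpace Ω] {P : Measure Ω} {n : ℕ}

private lemma quad_integrable (M : Ω → Matrix (Fin n) (Fin n) ℂ)
    (hint : ∀ i j, Integrable (fun ω => M ω i j) P) (x y : Fin n → ℂ) :
    Integrable (fun ω => star x ⬝ᵥ (M ω *ᵥ y)) P := by
  simp only [dotProduct, mulVec, Pi.star_apply]
  exact integrable_finset_sum _ fun i _ =>
    (integrable_finset_sum _ fun j _ => (hint i j).mul_const _).const_mul _

private lemma quad_integral (M : Ω → Matrix (Fin n) (Fin n) ℂ)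
    (hint : ∀ i j, Integrable (fun ω => M ω i j) P) (x y : Fin n → ℂ) :
    star x ⬝ᵥ ((Matrix.of fun i j => ∫ ω, M ω i j ∂P) *ᵥ y)
      = ∫ ω, star x ⬝ᵥ (M ω *ᵥ y) ∂P := by
  simp only [dotProduct, mulVec, Matrix.of_apply, Pi.star_apply]
  rw [integral_finset_sum _ (fun i _ =>
    (integrable_finset_sum _ fun j _ => (hint i j).mul_const _).const_mul _)]
  refine Finset.sum_congr rfl fun i _ => ?_
  calc star (x i) * ∑ j, (∫ ω, M ω i j ∂P) * y j
      = star (x i) * ∫ ω, ∑ j, M ω i j * y j ∂P := by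
        rw [integral_finset_sum _ fun j _ => (hint i j).mul_const _]
        exact congrArg _ (Finset.sum_congr rfl fun j _ => (integral_mul_const _ _).symm)
    _ = ∫ ω, star (x i) * ∑ j, M ω i j * y j ∂P := (integral_const_mul _ _).symm

private lemma integral_cnonneg {f : Ω → ℂ} (hf : Integrable f P)
    (h : ∀ᵐ ω ∂P, 0 ≤ f ω) : 0 ≤ ∫ ω, f ω ∂P := by
  rw [Complex.le_def]
  constructor
  · have hre := integral_re hf
    simp only [RCLike.re_to_complex] at hre
    rw [Complex.zero_re, ← hre]
    exact integral_nonneg_of_ae (h.mono fun ω hω => (Complex.le_def.1 hω).1)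
  · have him := integral_im hf
    simp only [RCLike.im_to_complex] at him
    rw [Complex.zero_im, ← him]
    have : (fun ω => (f ω).im) =ᵐ[P] fun _ => (0:ℝ) :=
      h.mono fun ω hω => by simpa using (Complex.le_def.1 hω).2.symm
    rw [integral_congr_ae this, integral_const, smul_zero]

private lemma integral_cpos [IsProbabilityMeasure P] {f : Ω → ℂ} (hf : Integrable f P)
    (h : ∀ᵐ ω ∂P, 0 < f ω) : 0 < ∫ ω, f ω ∂P := by
  rw [Complex.lt_def]
  refine ⟨?_, ?_⟩
  · have hre := integral_re hf
    simp only [RCLike.re_to_complex] at hre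
    rw [Complex.zero_re, ← hre]
    rw [integral_pos_iff_support_of_nonneg_ae
      (h.mono fun ω hω => (Complex.lt_def.1 hω).1.le) hf.re]
    have h1 : ∀ᵐ ω ∂P, ω ∈ Function.support fun ω => (f ω).re :=
      h.mono fun ω hω => (ne_of_gt (by simpa using (Complex.lt_def.1 hω).1))
    by_contra hc
    push_neg at hc
    have h0 : P (Function.support fun ω => (f ω).re) = 0 := le_antisymm hc zero_le
    have := ((MeasureTheory.measure_eq_zero_iff_ae_notMem).1 h0).and h1
    obtain ⟨ω, hω, hω'⟩ := this.exists
    exact hω hω'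
  · have him := integral_im hf
    simp only [RCLike.im_to_complex] at him
    rw [Complex.zero_im, ← him]
    have : (fun ω => (f ω).im) =ᵐ[P] fun _ => (0:ℝ) :=
      h.mono fun ω hω => by simpa using (Complex.lt_def.1 hω).2.symm
    rw [integral_congr_ae this, integral_const, smul_zero]

private lemma herm_integral (M : Ω → Matrix (Fin n) (Fin n) ℂ)
    (hae : ∀ᵐ ω ∂P, (M ω).IsHermitian) :
    (Matrix.of fun i j => ∫ ω, M ω i j ∂P).IsHermitian := by
  ext i j
  simp only [conjTranspose_apply, Matrix.of_apply]
  calc star (∫ ω, M ω j i ∂P) = (starRingEnd ℂ) (∫ ω, M ω j i ∂P) := rfl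
    _ = ∫ ω, (starRingEnd ℂ) (M ω j i) ∂P := integral_conj.symm
    _ = ∫ ω, M ω i j ∂P := integral_congr_ae (hae.mono fun ω hω => hω.apply i j)

private lemma dot_conj (K N : Matrix (Fin n) (Fin n) ℂ) (hN : N.IsHermitian) (x : Fin n → ℂ) :
    star x ⬝ᵥ ((N * K * N) *ᵥ x) = star (N *ᵥ x) ⬝ᵥ (K *ᵥ (N *ᵥ x)) := by
  conv_lhs => rw [show N * K * N = Nᴴ * K * N by rw [hN.eq]]
  simp only [star_mulVec, dotProduct_mulVec, vecMul_vecMul]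

end Helpers

/-- Matrix Jensen inequality implying ECRB ⪰ BCRB: for a random Hermitian,
almost surely positive definite matrix `J` with integrable entries and
integrable inverse entries, `E[J]` is positive definite and
`E[J⁻¹] − (E[J])⁻¹` is positive semidefinite (Loewner order). -/
theorem expected_inverse_dominates_inverse_expectation
    {Ω : Type*} [MeasurableSpace Ω] (P : Measure Ω) [IsProbabilityMeasure P]
    {n : ℕ} (J : Ω → Matrix (Fin n) (Fin n) ℂ)
    (hJ_meas : ∀ i j, Measurable fun ω => J ω i j)
    (hJ_posdef : ∀ᵐ ω ∂P, (J ω).PosDef)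
    (hJ_int : ∀ i j, Integrable (fun ω => J ω i j) P)
    (hJinv_int : ∀ i j, Integrable (fun ω => (J ω)⁻¹ i j) P) :
    (Matrix.of fun i j => ∫ ω, J ω i j ∂P).PosDef ∧
      ((Matrix.of fun i j => ∫ ω, (J ω)⁻¹ i j ∂P) -
        (Matrix.of fun i j => ∫ ω, J ω i j ∂P)⁻¹).PosSemidef := by
  set M : Matrix (Fin n) (Fin n) ℂ := Matrix.of fun i j => ∫ ω, J ω i j ∂P with hMdef
  set A : Matrix (Fin n) (Fin n) ℂ := Matrix.of fun i j => ∫ ω, (J ω)⁻¹ i j ∂P with hAdef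
  have hMposdef : M.PosDef := by
    refine Matrix.PosDef.of_dotProduct_mulVec_pos (herm_integral J (hJ_posdef.mono fun ω h => h.1)) fun x hx => ?_
    rw [hMdef, quad_integral J hJ_int x x]
    exact integral_cpos (quad_integrable J hJ_int x x)
      (hJ_posdef.mono fun ω h => h.dotProduct_mulVec_pos hx)
  refine ⟨hMposdef, ?_⟩
  have hBherm : M⁻¹.IsHermitian := hMposdef.inv.1
  have hMM : M⁻¹ * M = 1 :=
    Matrix.nonsing_inv_mul M ((Matrix.isUnit_iff_isUnit_det M).1 hMposdef.isUnit)
  refine Matrix.PosSemidef.of_dotProduct_mulVec_nonneg ((herm_integral (fun ω => (J ω)⁻¹)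
    (hJ_posdef.mono fun ω h => h.1.inv)).sub hBherm) fun x => ?_
  set y : Fin n → ℂ := M⁻¹ *ᵥ x with hy
  have hint1 := quad_integrable (fun ω => (J ω)⁻¹) hJinv_int x x
  have hint2 := quad_integrable J hJ_int y y
  set c : ℂ := star x ⬝ᵥ (M⁻¹ *ᵥ x) with hc
  have key : ∀ᵐ ω ∂P, 0 ≤ star x ⬝ᵥ ((J ω)⁻¹ *ᵥ x) + star y ⬝ᵥ (J ω *ᵥ y) - c - c := by
    refine hJ_posdef.mono fun ω hpd => ?_
    set K := J ω with hK
    have hKunit : IsUnit K.det := (Matrix.isUnit_iff_isUnit_det K).1 hpd.isUnit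
    have hC : (K⁻¹ - M⁻¹).IsHermitian := hpd.1.inv.sub hBherm
    have hps := (hpd.posSemidef.conjTranspose_mul_mul_same (K⁻¹ - M⁻¹)).dotProduct_mulVec_nonneg x
    have hexp : (K⁻¹ - M⁻¹)ᴴ * K * (K⁻¹ - M⁻¹)
        = K⁻¹ + M⁻¹ * K * M⁻¹ - M⁻¹ - M⁻¹ := by
      rw [hC.eq, Matrix.sub_mul, Matrix.sub_mul, Matrix.mul_sub, Matrix.mul_sub,
        Matrix.nonsing_inv_mul K hKunit, Matrix.mul_assoc M⁻¹ K K⁻¹,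
        Matrix.mul_nonsing_inv K hKunit, Matrix.mul_one, Matrix.one_mul, Matrix.one_mul]
      abel
    rw [hexp] at hps
    simp only [Matrix.add_mulVec, Matrix.sub_mulVec, dotProduct_add, dotProduct_sub] at hps
    rwa [dot_conj K M⁻¹ hBherm x] at hps
  have hintall : Integrable
      (fun ω => star x ⬝ᵥ ((J ω)⁻¹ *ᵥ x) + star y ⬝ᵥ (J ω *ᵥ y) - c - c) P :=
    ((hint1.add hint2).sub (integrable_const c)).sub (integrable_const c)
  have hnonneg := integral_cnonneg hintall key
  have hconst : ∫ _ω, c ∂P = c := by simp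
  have e1 : (∫ ω, (star x ⬝ᵥ ((J ω)⁻¹ *ᵥ x) + star y ⬝ᵥ (J ω *ᵥ y) - c - c) ∂P)
      = (∫ ω, star x ⬝ᵥ ((J ω)⁻¹ *ᵥ x) ∂P) + (∫ ω, star y ⬝ᵥ (J ω *ᵥ y) ∂P) - c - c := by
    rw [integral_sub _ (integrable_const c), integral_sub _ (integrable_const c),
      integral_add hint1 hint2, hconst]
    · exact hint1.add hint2
    · exact (hint1.add hint2).sub (integrable_const c)
  rw [e1, ← quad_integral (fun ω => (J ω)⁻¹) hJinv_int x x,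
    ← quad_integral J hJ_int y y, ← hAdef] at hnonneg
  have hyM : star y ⬝ᵥ (M *ᵥ y) = c := by
    rw [hy, ← dot_conj M M⁻¹ hBherm x, hMM, Matrix.one_mul]
  rw [hyM] at hnonneg
  rw [Matrix.sub_mulVec, dotProduct_sub]
  have e2 : star x ⬝ᵥ (A *ᵥ x) + c - c - c = star x ⬝ᵥ (A *ᵥ x) - star x ⬝ᵥ (M⁻¹ *ᵥ x) := by
    rw [← hc]; ring
  rwa [e2] at hnonneg
end

section
/- Bayesian Fisher information of the scalar LGO model (Eq. (fim_LGO) of the paper, real scalar case M = 1): Let θ ~ N(0,1); let the analog measurement be x_a = h·θ + u_a with u_a ~ N(0, σ_a²) independent of θ (h ∈ ℝ, σ_a > 0); and let the quantized measurement be the binary variable b = 1{t·θ + u_q ≥ τ} with u_q ~ N(0, σ_q²) independent of (θ, u_a) (t, τ ∈ ℝ, σ_q > 0). The joint density of (θ, x_a, b) with respect to Lebesgue ⊗ Lebesgue ⊗ counting measure is f(θ,x_a,b) = φ(θ) · (1/σ_a)φ((x_a − hθ)/σ_a) · q(θ)^b (1−q(θ))^{1−b}, where q(θ) = Φ((tθ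 − τ)/σ_q). Then the Bayesian Fisher information J = E[(∂_θ log f(θ,x_a,b))²] satisfies J = 1 + h²/σ_a² + (t²/σ_q²) · E[ φ(Z)² / (Φ(Z)·Φ(−Z)) ], where Z = (tθ − τ)/σ_q and the last expectation is over θ ~ N(0,1). -/
open MeasureTheory ProbabilityTheory

/-- The standard normal density `φ(t) = (2π)^{-1/2} exp(−t²/2)`. -/
noncomputable def stdNormalPDF (t : ℝ) : ℝ :=
  (Real.sqrt (2 * Real.pi))⁻¹ * Real.exp (-t ^ 2 / 2)

/-- The standard normal CDF `Φ(z) = ∫_{−∞}^z φ(t) dt`. -/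
noncomputable def stdNormalCDF (z : ℝ) : ℝ :=
  ∫ t in Set.Iic z, stdNormalPDF t

open Real Set
open scoped ENNReal NNReal

lemma stdNormalPDF_pos (x : ℝ) : 0 < stdNormalPDF x := by
  have : 0 < Real.sqrt (2 * Real.pi) := Real.sqrt_pos.2 (by positivity)
  exact mul_pos (by positivity) (Real.exp_pos _)

lemma stdNormalPDF_nonneg (x : ℝ) : 0 ≤ stdNormalPDF x := (stdNormalPDF_pos x).le

lemma continuous_stdNormalPDF : Continuous stdNormalPDF := by
  unfold stdNormalPDF; fun_prop

lemma stdNormalPDF_eq_gaussian : stdNormalPDF = gaussianPDFReal 0 1 := by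
  funext x
  simp [stdNormalPDF, gaussianPDFReal]

lemma integrable_stdNormalPDF : Integrable stdNormalPDF := by
  rw [stdNormalPDF_eq_gaussian]; exact integrable_gaussianPDFReal 0 1

lemma integral_stdNormalPDF : ∫ x, stdNormalPDF x = 1 := by
  rw [stdNormalPDF_eq_gaussian]; exact integral_gaussianPDFReal_eq_one 0 one_ne_zero

lemma stdNormalPDF_neg (x : ℝ) : stdNormalPDF (-x) = stdNormalPDF x := by
  simp [stdNormalPDF]

lemma stdNormalPDF_le_of_le {x y : ℝ} (hx : |x| ≤ |y|) : stdNormalPDF y ≤ stdNormalPDF x := by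
  unfold stdNormalPDF
  have hsq : x ^ 2 ≤ y ^ 2 := by
    have := sq_abs x ▸ sq_abs y ▸ pow_le_pow_left₀ (abs_nonneg x) hx 2
    simpa [sq_abs] using this
  have h2 : Real.exp (-y ^ 2 / 2) ≤ Real.exp (-x ^ 2 / 2) := by
    apply Real.exp_le_exp.2; linarith
  exact mul_le_mul_of_nonneg_left h2 (by positivity)

lemma stdNormalCDF_sub_cdf (a b : ℝ) :
    stdNormalCDF b - stdNormalCDF a = ∫ t in a..b, stdNormalPDF t :=
  intervalIntegral.integral_Iic_sub_Iic integrable_stdNormalPDF.integrableOn integrable_stdNormalPDF.integrableOn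

lemma hasDerivAt_stdNormalCDF (z : ℝ) : HasDerivAt stdNormalCDF (stdNormalPDF z) z := by
  have hd : HasDerivAt (fun x => stdNormalCDF 0 + ∫ t in (0:ℝ)..x, stdNormalPDF t)
      (stdNormalPDF z) z :=
    HasDerivAt.const_add _ <| intervalIntegral.integral_hasDerivAt_right
      (integrable_stdNormalPDF.intervalIntegrable)
      (continuous_stdNormalPDF.stronglyMeasurable.stronglyMeasurableAtFilter)
      continuous_stdNormalPDF.continuousAt
  refine hd.congr_of_eventuallyEq (Filter.Eventually.of_forall fun x => ?_)
  show stdNormalCDF x = stdNormalCDF 0 + ∫ t in (0:ℝ)..x, stdNormalPDF t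
  rw [← stdNormalCDF_sub_cdf 0 x]; ring

lemma continuous_stdNormalCDF : Continuous stdNormalCDF :=
  continuous_iff_continuousAt.2 fun z => (hasDerivAt_stdNormalCDF z).continuousAt

lemma stdNormalCDF_pos (z : ℝ) : 0 < stdNormalCDF z := by
  rw [stdNormalCDF]
  refine (setIntegral_pos_iff_support_of_nonneg_ae
    (Filter.Eventually.of_forall fun x => stdNormalPDF_nonneg x)
    integrable_stdNormalPDF.integrableOn).2 ?_
  have hs : Function.support stdNormalPDF = univ := by
    ext x; simp [Function.mem_support, (stdNormalPDF_pos x).ne']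
  rw [hs, univ_inter]
  simp [Real.volume_Iic]

lemma stdNormalCDF_add_tail (z : ℝ) :
    stdNormalCDF z + ∫ x in Ioi z, stdNormalPDF x = 1 := by
  rw [stdNormalCDF, intervalIntegral.integral_Iic_add_Ioi integrable_stdNormalPDF.integrableOn
    integrable_stdNormalPDF.integrableOn, integral_stdNormalPDF]

lemma tail_pos (z : ℝ) : 0 < ∫ x in Ioi z, stdNormalPDF x := by
  refine (setIntegral_pos_iff_support_of_nonneg_ae
    (Filter.Eventually.of_forall fun x => stdNormalPDF_nonneg x)
    integrable_stdNormalPDF.integrableOn).2 ?_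
  have hs : Function.support stdNormalPDF = univ := by
    ext x; simp [Function.mem_support, (stdNormalPDF_pos x).ne']
  rw [hs, univ_inter]
  simp [Real.volume_Ioi]

lemma stdNormalCDF_lt_one (z : ℝ) : stdNormalCDF z < 1 := by
  have := stdNormalCDF_add_tail z
  have := tail_pos z
  linarith

lemma stdNormalCDF_neg (z : ℝ) : stdNormalCDF (-z) = 1 - stdNormalCDF z := by
  have h1 : stdNormalCDF (-z) = ∫ x in Ioi z, stdNormalPDF x := by
    rw [stdNormalCDF]
    have : ∫ x in Iic (-z), stdNormalPDF x = ∫ x in Iic (-z), stdNormalPDF (-x) := by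
      exact setIntegral_congr_fun measurableSet_Iic fun x _ => (stdNormalPDF_neg x).symm
    rw [this, integral_comp_neg_Iic, neg_neg]
  have := stdNormalCDF_add_tail z
  linarith

lemma stdNormalCDF_mono : Monotone stdNormalCDF := by
  intro a b hab
  exact setIntegral_mono_set integrable_stdNormalPDF.integrableOn
    (Filter.Eventually.of_forall fun x => stdNormalPDF_nonneg x)
    (HasSubset.Subset.eventuallyLE (Iic_subset_Iic.2 hab))

lemma integrable_id_mul_stdNormalPDF : Integrable fun x : ℝ => x * stdNormalPDF x := by
  have he : (fun x : ℝ => x * stdNormalPDF x)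
      = fun x : ℝ => (Real.sqrt (2 * Real.pi))⁻¹ * (x * Real.exp (-2⁻¹ * x ^ 2)) := by
    funext x
    have : (-2⁻¹ * x ^ 2 : ℝ) = -x ^ 2 / 2 := by ring
    rw [this, stdNormalPDF]; ring
  rw [he]
  exact (integrable_mul_exp_neg_mul_sq (by norm_num : (0:ℝ) < 2⁻¹)).const_mul _

lemma integral_id_mul_stdNormalPDF : ∫ x, x * stdNormalPDF x = 0 := by
  have h := integral_neg_eq_self (fun x : ℝ => x * stdNormalPDF x) (volume : Measure ℝ)
  simp only [stdNormalPDF_neg, neg_mul, integral_neg] at h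
  linarith

lemma integrable_sq_mul_stdNormalPDF : Integrable fun x : ℝ => x ^ 2 * stdNormalPDF x := by
  refine Integrable.mono' (((integrable_exp_neg_mul_sq
    (by norm_num : (0:ℝ) < 4⁻¹)).const_mul ((Real.sqrt (2 * Real.pi))⁻¹ * 4)))
    ((continuous_pow 2).mul continuous_stdNormalPDF).aestronglyMeasurable
    (Filter.Eventually.of_forall fun x => ?_)
  have h1 : x ^ 2 / 4 ≤ Real.exp (x ^ 2 / 4) := by
    have := Real.add_one_le_exp (x ^ 2 / 4); linarith
  have h2 : x ^ 2 * Real.exp (-(x ^ 2 / 4)) ≤ 4 := by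
    rw [Real.exp_neg, mul_inv_le_iff₀ (Real.exp_pos _)]
    linarith
  have h3 : Real.exp (-x ^ 2 / 2) = Real.exp (-(x ^ 2 / 4)) * Real.exp (-(x ^ 2 / 4)) := by
    rw [← Real.exp_add]; ring_nf
  have h4 : (0:ℝ) < (Real.sqrt (2 * Real.pi))⁻¹ := by
    have : 0 < Real.sqrt (2 * Real.pi) := Real.sqrt_pos.2 (by positivity)
    positivity
  rw [Real.norm_eq_abs, abs_of_nonneg (mul_nonneg (sq_nonneg x) (stdNormalPDF_nonneg x))]
  have h5 : (-4⁻¹ * x ^ 2 : ℝ) = -(x ^ 2 / 4) := by ring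
  rw [stdNormalPDF, h3, h5]
  calc x ^ 2 * ((Real.sqrt (2 * Real.pi))⁻¹ * (Real.exp (-(x ^ 2 / 4)) * Real.exp (-(x ^ 2 / 4))))
      = (Real.sqrt (2 * Real.pi))⁻¹ * ((x ^ 2 * Real.exp (-(x ^ 2 / 4))) * Real.exp (-(x ^ 2 / 4))) := by ring
    _ ≤ (Real.sqrt (2 * Real.pi))⁻¹ * (4 * Real.exp (-(x ^ 2 / 4))) := by
        have := mul_le_mul_of_nonneg_right h2 (Real.exp_pos (-(x ^ 2 / 4))).le
        exact mul_le_mul_of_nonneg_left this h4.le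
    _ = (Real.sqrt (2 * Real.pi))⁻¹ * 4 * Real.exp (-(x ^ 2 / 4)) := by ring

lemma hasDerivAt_stdNormalPDF (x : ℝ) :
    HasDerivAt stdNormalPDF (-x * stdNormalPDF x) x := by
  have h1 : HasDerivAt (fun y : ℝ => -y ^ 2 / 2) (-x) x := by
    have h0 : HasDerivAt (fun y : ℝ => y ^ 2) (2 * x ^ 1) x := by
      simpa using hasDerivAt_pow 2 x
    have := (h0.neg.div_const 2)
    simp only [pow_one] at this
    refine this.congr_deriv ?_
    ring
  have h2 := (h1.exp).const_mul (Real.sqrt (2 * Real.pi))⁻¹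
  have heq : (fun y : ℝ => (Real.sqrt (2 * Real.pi))⁻¹ * Real.exp (-y ^ 2 / 2))
      = stdNormalPDF := by funext y; rw [stdNormalPDF]
  rw [heq] at h2
  refine h2.congr_deriv ?_
  rw [stdNormalPDF]; ring

lemma tendsto_id_mul_stdNormalPDF_cocompact :
    Filter.Tendsto (fun x : ℝ => x * stdNormalPDF x) (Filter.cocompact ℝ) (nhds 0) := by
  have h := tendsto_rpow_abs_mul_exp_neg_mul_sq_cocompact (by norm_num : (0:ℝ) < 2⁻¹) 1
  have h2 : Filter.Tendsto
      (fun x : ℝ => (Real.sqrt (2 * Real.pi))⁻¹ * (|x| ^ (1:ℝ) * Real.exp (-2⁻¹ * x ^ 2)))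
      (Filter.cocompact ℝ) (nhds ((Real.sqrt (2 * Real.pi))⁻¹ * 0)) := h.const_mul _
  rw [mul_zero] at h2
  refine squeeze_zero_norm (fun x => ?_) h2
  rw [Real.rpow_one, Real.norm_eq_abs, abs_mul, abs_of_pos (stdNormalPDF_pos x)]
  have h5 : (-2⁻¹ * x ^ 2 : ℝ) = -x ^ 2 / 2 := by ring
  rw [stdNormalPDF, h5]
  exact le_of_eq (by ring)

lemma integral_sq_mul_stdNormalPDF : ∫ x, x ^ 2 * stdNormalPDF x = 1 := by
  have hderiv : ∀ x : ℝ, HasDerivAt (fun y : ℝ => -(y * stdNormalPDF y))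
      (x ^ 2 * stdNormalPDF x - stdNormalPDF x) x := by
    intro x
    have := ((hasDerivAt_id x).mul (hasDerivAt_stdNormalPDF x)).neg
    refine this.congr_deriv ?_
    simp only [id_eq, one_mul]
    ring
  have hint : Integrable fun x : ℝ => x ^ 2 * stdNormalPDF x - stdNormalPDF x :=
    integrable_sq_mul_stdNormalPDF.sub integrable_stdNormalPDF
  have hcc := tendsto_id_mul_stdNormalPDF_cocompact.neg
  rw [neg_zero, cocompact_eq_atBot_atTop] at hcc
  have h := integral_of_hasDerivAt_of_tendsto hderiv hint
    (hcc.mono_left le_sup_left) (hcc.mono_left le_sup_right)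
  rw [sub_zero] at h
  have h2 := integral_sub integrable_sq_mul_stdNormalPDF integrable_stdNormalPDF
  rw [h, integral_stdNormalPDF] at h2
  linarith

lemma stdNormalPDF_le_cdf_neg_abs (z : ℝ) :
    stdNormalPDF (|z| + 1) ≤ stdNormalCDF (-|z|) := by
  have hvol : (volume (Icc (-|z| - 1) (-|z|))).toReal = 1 := by
    rw [Real.volume_Icc]
    norm_num
  have h1 : stdNormalPDF (|z| + 1) * (volume (Icc (-|z| - 1) (-|z|))).toReal
      ≤ ∫ x in Icc (-|z| - 1) (-|z|), stdNormalPDF x := by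
    refine setIntegral_ge_of_const_le_real measurableSet_Icc ?_ (fun x hx => ?_)
      integrable_stdNormalPDF.integrableOn
    · rw [Real.volume_Icc]; exact ENNReal.ofReal_ne_top
    · refine stdNormalPDF_le_of_le ?_
      have hz := abs_nonneg z
      have hx1 := hx.1; have hx2 := hx.2
      rw [abs_le, abs_of_nonneg (by linarith : (0:ℝ) ≤ |z| + 1)]
      constructor <;> linarith
  have h2 : (∫ x in Icc (-|z| - 1) (-|z|), stdNormalPDF x) ≤ stdNormalCDF (-|z|) := by
    rw [stdNormalCDF]
    exact setIntegral_mono_set integrable_stdNormalPDF.integrableOn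
      (Filter.Eventually.of_forall fun x => stdNormalPDF_nonneg x)
      (HasSubset.Subset.eventuallyLE Icc_subset_Iic_self)
  rw [hvol, mul_one] at h1
  linarith

lemma cdf_mul_one_sub_ge (z : ℝ) :
    stdNormalPDF (|z| + 1) / 2 ≤ stdNormalCDF z * (1 - stdNormalCDF z) := by
  set a := stdNormalCDF z with ha
  set m := stdNormalPDF (|z| + 1) with hm
  have h1 : m ≤ a := le_trans (stdNormalPDF_le_cdf_neg_abs z)
    (stdNormalCDF_mono (neg_abs_le z))
  have h2 : m ≤ 1 - a := by
    have h3 : stdNormalCDF (-|z|) ≤ stdNormalCDF (-z) :=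
      stdNormalCDF_mono (by simpa using le_abs_self z)
    have h4 := stdNormalCDF_neg z
    have := stdNormalPDF_le_cdf_neg_abs z
    rw [← hm] at this
    linarith
  have hmpos : 0 < m := stdNormalPDF_pos _
  rcases le_total a (1 - a) with hc | hc
  · nlinarith
  · nlinarith

lemma fisher_term_bound (z : ℝ) :
    stdNormalPDF z ^ 2 / (stdNormalCDF z * (1 - stdNormalCDF z))
      ≤ 2 * Real.exp 1 * (Real.sqrt (2 * Real.pi))⁻¹ := by
  set m := stdNormalPDF (|z| + 1) with hm
  have hmpos : 0 < m := stdNormalPDF_pos _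
  have hc : 0 < (Real.sqrt (2 * Real.pi))⁻¹ := by
    have : 0 < Real.sqrt (2 * Real.pi) := Real.sqrt_pos.2 (by positivity)
    positivity
  have hkey : stdNormalPDF z ^ 2 ≤ Real.exp 1 * (Real.sqrt (2 * Real.pi))⁻¹ * m := by
    rw [hm, stdNormalPDF, stdNormalPDF, mul_pow]
    have hexp : Real.exp (-z ^ 2 / 2) ^ 2 = Real.exp (-z ^ 2) := by
      rw [sq, ← Real.exp_add]; ring_nf
    have hle : Real.exp (-z ^ 2) ≤ Real.exp 1 * Real.exp (-(|z| + 1) ^ 2 / 2) := by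
      rw [← Real.exp_add]
      refine Real.exp_le_exp.2 ?_
      nlinarith [sq_nonneg (|z| - 1), sq_abs z]
    rw [hexp]
    calc (Real.sqrt (2 * Real.pi))⁻¹ ^ 2 * Real.exp (-z ^ 2)
        ≤ (Real.sqrt (2 * Real.pi))⁻¹ ^ 2 * (Real.exp 1 * Real.exp (-(|z| + 1) ^ 2 / 2)) :=
          mul_le_mul_of_nonneg_left hle (by positivity)
      _ = Real.exp 1 * (Real.sqrt (2 * Real.pi))⁻¹ *
          ((Real.sqrt (2 * Real.pi))⁻¹ * Real.exp (-(|z| + 1) ^ 2 / 2)) := by ring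
  have hdiv : stdNormalPDF z ^ 2 / (stdNormalCDF z * (1 - stdNormalCDF z))
      ≤ (Real.exp 1 * (Real.sqrt (2 * Real.pi))⁻¹ * m) / (m / 2) :=
    div_le_div₀ (by positivity) hkey (by positivity) (cdf_mul_one_sub_ge z)
  refine le_trans hdiv (le_of_eq ?_)
  field_simp

lemma integrable_poly2_mul_stdNormalPDF (a b c : ℝ) :
    Integrable fun u : ℝ => (a + b * u + c * u ^ 2) * stdNormalPDF u := by
  have he : (fun u : ℝ => (a + b * u + c * u ^ 2) * stdNormalPDF u)
      = fun u : ℝ => a * stdNormalPDF u + b * (u * stdNormalPDF u)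
          + c * (u ^ 2 * stdNormalPDF u) := by
    funext u; ring
  rw [he]
  exact ((integrable_stdNormalPDF.const_mul a).add
    (integrable_id_mul_stdNormalPDF.const_mul b)).add
    (integrable_sq_mul_stdNormalPDF.const_mul c)

lemma integral_poly2_mul_stdNormalPDF (a b c : ℝ) :
    ∫ u, (a + b * u + c * u ^ 2) * stdNormalPDF u = a + c := by
  have he : (fun u : ℝ => (a + b * u + c * u ^ 2) * stdNormalPDF u)
      = fun u : ℝ => a * stdNormalPDF u + b * (u * stdNormalPDF u)
          + c * (u ^ 2 * stdNormalPDF u) := by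
    funext u; ring
  rw [he, integral_add (show Integrable (fun u : ℝ => a * stdNormalPDF u + b * (u * stdNormalPDF u))
        volume from (integrable_stdNormalPDF.const_mul a).add
        (integrable_id_mul_stdNormalPDF.const_mul b))
      (integrable_sq_mul_stdNormalPDF.const_mul c),
    integral_add (integrable_stdNormalPDF.const_mul a) (integrable_id_mul_stdNormalPDF.const_mul b),
    MeasureTheory.integral_const_mul, MeasureTheory.integral_const_mul, MeasureTheory.integral_const_mul,
    integral_stdNormalPDF, integral_id_mul_stdNormalPDF, integral_sq_mul_stdNormalPDF]
  ring

lemma integrable_comp_affine {g : ℝ → ℝ} (hg : Integrable g) (c : ℝ) {σ : ℝ} (hσ : 0 < σ) :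
    Integrable fun x : ℝ => g ((x - c) / σ) :=
  Integrable.comp_sub_right (hg.comp_div hσ.ne') c

lemma integral_comp_affine {g : ℝ → ℝ} (hg : Integrable g) (c : ℝ) {σ : ℝ} (hσ : 0 < σ) :
    ∫ x, g ((x - c) / σ) = σ * ∫ u, g u := by
  have h1 : (∫ x : ℝ, (fun y : ℝ => g (y / σ)) (x - c)) = ∫ y : ℝ, g (y / σ) :=
    integral_sub_right_eq_self (fun y : ℝ => g (y / σ)) c
  have h2 : (∫ y : ℝ, g (y / σ)) = |σ| • ∫ u, g u := Measure.integral_comp_div g σ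
  rw [show (fun x : ℝ => g ((x - c) / σ)) = fun x : ℝ => (fun y : ℝ => g (y / σ)) (x - c) from rfl,
    h1, h2, abs_of_pos hσ, smul_eq_mul]

/-- Joint density of `(θ, x_a, b)` in the scalar LGO model with respect to
Lebesgue ⊗ Lebesgue ⊗ counting measure:
`f(θ,x_a,b) = φ(θ) · (1/σ_a) φ((x_a − hθ)/σ_a) · q(θ)^b (1−q(θ))^{1−b}`,
where `q(θ) = Φ((tθ − τ)/σ_q)`. -/
noncomputable def lgoDensity (h t τ σa σq : ℝ) (θ xa : ℝ) (b : Fin 2) : ℝ :=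
  stdNormalPDF θ * (σa⁻¹ * stdNormalPDF ((xa - h * θ) / σa)) *
    (stdNormalCDF ((t * θ - τ) / σq)) ^ (b : ℕ) *
      (1 - stdNormalCDF ((t * θ - τ) / σq)) ^ (1 - (b : ℕ))

lemma lgoDensity_pos {h t τ σa σq : ℝ} (hσa : 0 < σa) (θ xa : ℝ) (b : Fin 2) :
    0 < lgoDensity h t τ σa σq θ xa b := by
  unfold lgoDensity
  have h1 := stdNormalPDF_pos θ
  have h2 := stdNormalPDF_pos ((xa - h * θ) / σa)
  have h3 := stdNormalCDF_pos ((t * θ - τ) / σq)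
  have h4 := stdNormalCDF_lt_one ((t * θ - τ) / σq)
  exact mul_pos (mul_pos (mul_pos h1 (mul_pos (inv_pos.2 hσa) h2)) (pow_pos h3 _))
    (pow_pos (by linarith) _)

lemma log_lgoDensity {h t τ σa σq : ℝ} (hσa : 0 < σa) (xa : ℝ) (b : Fin 2) (s : ℝ) :
    Real.log (lgoDensity h t τ σa σq s xa b)
      = Real.log (stdNormalPDF s) + Real.log (σa⁻¹ * stdNormalPDF ((xa - h * s) / σa))
        + ((b : ℕ) : ℝ) * Real.log (stdNormalCDF ((t * s - τ) / σq))
        + ((1 - (b : ℕ) : ℕ) : ℝ) * Real.log (1 - stdNormalCDF ((t * s - τ) / σq)) := by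
  unfold lgoDensity
  have h1 := stdNormalPDF_pos s
  have h2 := stdNormalPDF_pos ((xa - h * s) / σa)
  have h3 := stdNormalCDF_pos ((t * s - τ) / σq)
  have h4 := stdNormalCDF_lt_one ((t * s - τ) / σq)
  have hB : (0:ℝ) < σa⁻¹ * stdNormalPDF ((xa - h * s) / σa) := mul_pos (inv_pos.2 hσa) h2
  rw [Real.log_mul (by positivity) (pow_ne_zero _ (by linarith)),
    Real.log_mul (by positivity) (pow_ne_zero _ h3.ne'),
    Real.log_mul h1.ne' hB.ne', Real.log_pow, Real.log_pow]

lemma score_hasDerivAt {h t τ σa σq : ℝ} (hσa : 0 < σa) (hσq : 0 < σq) (xa θ : ℝ) (b : Fin 2) :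
    HasDerivAt (fun s : ℝ => Real.log (lgoDensity h t τ σa σq s xa b))
      (-θ + h * (xa - h * θ) / σa ^ 2
        + (((b : ℕ) : ℝ) * (t / σq * stdNormalPDF ((t * θ - τ) / σq)
            / stdNormalCDF ((t * θ - τ) / σq))
          + ((1 - (b : ℕ) : ℕ) : ℝ) * -(t / σq * stdNormalPDF ((t * θ - τ) / σq)
            / (1 - stdNormalCDF ((t * θ - τ) / σq))))) θ := by
  have hq := stdNormalCDF_pos ((t * θ - τ) / σq)
  have hq1 := stdNormalCDF_lt_one ((t * θ - τ) / σq)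
  have d1 : HasDerivAt (fun s : ℝ => Real.log (stdNormalPDF s)) (-θ) θ := by
    have := (hasDerivAt_stdNormalPDF θ).log (stdNormalPDF_pos θ).ne'
    convert this using 1
    field_simp [(stdNormalPDF_pos θ).ne']
  have hu : HasDerivAt (fun s : ℝ => (xa - h * s) / σa) (-h / σa) θ := by
    have : HasDerivAt (fun s : ℝ => h * s) h θ := by
      simpa using (hasDerivAt_id θ).const_mul h
    simpa using (this.const_sub xa).div_const σa
  have d2 : HasDerivAt (fun s : ℝ => Real.log (σa⁻¹ * stdNormalPDF ((xa - h * s) / σa)))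
      (h * (xa - h * θ) / σa ^ 2) θ := by
    have hcomp := (hasDerivAt_stdNormalPDF ((xa - h * θ) / σa)).comp θ hu
    have hpos : 0 < stdNormalPDF ((xa - h * θ) / σa) := stdNormalPDF_pos _
    have heq : (fun s : ℝ => Real.log (σa⁻¹ * stdNormalPDF ((xa - h * s) / σa)))
        = fun s : ℝ => Real.log σa⁻¹ + Real.log (stdNormalPDF ((xa - h * s) / σa)) := by
      funext s
      rw [Real.log_mul (inv_ne_zero hσa.ne') (stdNormalPDF_pos _).ne']
    rw [heq]
    have := (hcomp.log hpos.ne').const_add (Real.log σa⁻¹)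
    refine this.congr_deriv ?_
    simp only [Function.comp_apply]
    field_simp [hpos.ne']
  have hZ : HasDerivAt (fun s : ℝ => (t * s - τ) / σq) (t / σq) θ := by
    have : HasDerivAt (fun s : ℝ => t * s) t θ := by
      simpa using (hasDerivAt_id θ).const_mul t
    simpa using (this.sub_const τ).div_const σq
  have hqd : HasDerivAt (fun s : ℝ => stdNormalCDF ((t * s - τ) / σq))
      (stdNormalPDF ((t * θ - τ) / σq) * (t / σq)) θ :=
    by have := (hasDerivAt_stdNormalCDF ((t * θ - τ) / σq)).comp θ hZ; exact this
  have d3 : HasDerivAt (fun s : ℝ => Real.log (stdNormalCDF ((t * s - τ) / σq)))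
      (t / σq * stdNormalPDF ((t * θ - τ) / σq) / stdNormalCDF ((t * θ - τ) / σq)) θ := by
    have := hqd.log hq.ne'
    convert this using 1
    ring
  have d4 : HasDerivAt (fun s : ℝ => Real.log (1 - stdNormalCDF ((t * s - τ) / σq)))
      (-(t / σq * stdNormalPDF ((t * θ - τ) / σq)
        / (1 - stdNormalCDF ((t * θ - τ) / σq)))) θ := by
    have h1q : HasDerivAt (fun s : ℝ => 1 - stdNormalCDF ((t * s - τ) / σq))
        (-(stdNormalPDF ((t * θ - τ) / σq) * (t / σq))) θ := hqd.const_sub 1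
    have := h1q.log (by linarith : (1:ℝ) - stdNormalCDF ((t * θ - τ) / σq) ≠ 0)
    convert this using 1
    · ring
  have dAll := (d1.add d2).add ((d3.const_mul ((b : ℕ) : ℝ)).add
    (d4.const_mul ((1 - (b : ℕ) : ℕ) : ℝ)))
  have := dAll.congr_of_eventuallyEq
    (Filter.Eventually.of_forall fun s =>
      (by rw [log_lgoDensity hσa xa b s]; ring :
        Real.log (lgoDensity h t τ σa σq s xa b)
          = Real.log (stdNormalPDF s) + Real.log (σa⁻¹ * stdNormalPDF ((xa - h * s) / σa))
            + (((b : ℕ) : ℝ) * Real.log (stdNormalCDF ((t * s - τ) / σq))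
              + ((1 - (b : ℕ) : ℕ) : ℝ) * Real.log (1 - stdNormalCDF ((t * s - τ) / σq)))))
  exact this

lemma measurable_stdNormalPDF : Measurable stdNormalPDF := continuous_stdNormalPDF.measurable
lemma measurable_stdNormalCDF : Measurable stdNormalCDF := continuous_stdNormalCDF.measurable

noncomputable def lgoScore (h t τ σa σq θ xa : ℝ) (b : Fin 2) : ℝ :=
  -θ + h * (xa - h * θ) / σa ^ 2
    + (((b : ℕ) : ℝ) * (t / σq * stdNormalPDF ((t * θ - τ) / σq) / stdNormalCDF ((t * θ - τ) / σq))
      + ((1 - (b : ℕ) : ℕ) : ℝ) *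
          -(t / σq * stdNormalPDF ((t * θ - τ) / σq) / (1 - stdNormalCDF ((t * θ - τ) / σq))))

lemma measurable_F (h t τ σa σq : ℝ) :
    Measurable (fun p : ℝ × ℝ × Fin 2 =>
      lgoScore h t τ σa σq p.1 p.2.1 p.2.2 ^ 2 * lgoDensity h t τ σa σq p.1 p.2.1 p.2.2) := by
  have mθ : Measurable fun p : ℝ × ℝ × Fin 2 => p.1 := measurable_fst
  have mxa : Measurable fun p : ℝ × ℝ × Fin 2 => p.2.1 := measurable_snd.fst
  have mbn : Measurable fun p : ℝ × ℝ × Fin 2 => ((p.2.2 : ℕ) : ℝ) :=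
    (measurable_of_countable (fun b : Fin 2 => ((b : ℕ) : ℝ))).comp measurable_snd.snd
  have mbn' : Measurable fun p : ℝ × ℝ × Fin 2 => (((1 : ℕ) - (p.2.2 : ℕ) : ℕ) : ℝ) :=
    (measurable_of_countable (fun b : Fin 2 => (((1 : ℕ) - (b : ℕ) : ℕ) : ℝ))).comp
      measurable_snd.snd
  have mbe : Measurable fun p : ℝ × ℝ × Fin 2 => (p.2.2 : ℕ) :=
    (measurable_of_countable (fun b : Fin 2 => (b : ℕ))).comp measurable_snd.snd
  have mbe' : Measurable fun p : ℝ × ℝ × Fin 2 => ((1 : ℕ) - (p.2.2 : ℕ) : ℕ) :=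
    (measurable_of_countable (fun b : Fin 2 => ((1 : ℕ) - (b : ℕ) : ℕ))).comp
      measurable_snd.snd
  have mZ : Measurable fun p : ℝ × ℝ × Fin 2 => (t * p.1 - τ) / σq :=
    ((mθ.const_mul t).sub_const τ).div_const σq
  have mU : Measurable fun p : ℝ × ℝ × Fin 2 => (p.2.1 - h * p.1) / σa :=
    ((mxa.sub (mθ.const_mul h)).div_const σa)
  have mφθ : Measurable fun p : ℝ × ℝ × Fin 2 => stdNormalPDF p.1 :=
    measurable_stdNormalPDF.comp mθ
  have mφU : Measurable fun p : ℝ × ℝ × Fin 2 => stdNormalPDF ((p.2.1 - h * p.1) / σa) :=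
    measurable_stdNormalPDF.comp mU
  have mφZ : Measurable fun p : ℝ × ℝ × Fin 2 => stdNormalPDF ((t * p.1 - τ) / σq) :=
    measurable_stdNormalPDF.comp mZ
  have mΦZ : Measurable fun p : ℝ × ℝ × Fin 2 => stdNormalCDF ((t * p.1 - τ) / σq) :=
    measurable_stdNormalCDF.comp mZ
  have mscore : Measurable fun p : ℝ × ℝ × Fin 2 => lgoScore h t τ σa σq p.1 p.2.1 p.2.2 := by
    unfold lgoScore
    exact (mθ.neg.add (((mxa.sub (mθ.const_mul h)).const_mul h).div_const (σa ^ 2))).add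
      ((mbn.mul (((mφZ.const_mul (t / σq)).div mΦZ)))
        |>.add (mbn'.mul ((mφZ.const_mul (t / σq)).div ((measurable_const.sub mΦZ))).neg))
  have mdens : Measurable fun p : ℝ × ℝ × Fin 2 => lgoDensity h t τ σa σq p.1 p.2.1 p.2.2 := by
    unfold lgoDensity
    exact ((mφθ.mul (mφU.const_mul σa⁻¹)).mul (mΦZ.pow mbe)).mul
      ((measurable_const.sub mΦZ).pow mbe')
  exact (mscore.pow_const 2).mul mdens

lemma score_deriv_eq {h t τ σa σq : ℝ} (hσa : 0 < σa) (hσq : 0 < σq) (θ xa : ℝ) (b : Fin 2) :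
    deriv (fun s : ℝ => Real.log (lgoDensity h t τ σa σq s xa b)) θ
      = lgoScore h t τ σa σq θ xa b := by
  unfold lgoScore
  exact (score_hasDerivAt hσa hσq xa θ b).deriv

noncomputable def lgoD (t τ σq θ : ℝ) : ℝ :=
  (t / σq) ^ 2 * stdNormalPDF ((t * θ - τ) / σq) ^ 2 /
    (stdNormalCDF ((t * θ - τ) / σq) * (1 - stdNormalCDF ((t * θ - τ) / σq)))

noncomputable def lgoInner (h t τ σa σq θ xa : ℝ) : ℝ :=
  stdNormalPDF θ * (σa⁻¹ * stdNormalPDF ((xa - h * θ) / σa)) *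
    ((-θ + h * (xa - h * θ) / σa ^ 2) ^ 2 + lgoD t τ σq θ)

noncomputable def lgoG (h t τ σa σq θ : ℝ) : ℝ :=
  stdNormalPDF θ * (θ ^ 2 + h ^ 2 / σa ^ 2 + lgoD t τ σq θ)

lemma lgoD_nonneg (t τ σq θ : ℝ) : 0 ≤ lgoD t τ σq θ := by
  unfold lgoD
  have h3 := stdNormalCDF_pos ((t * θ - τ) / σq)
  have h4 := stdNormalCDF_lt_one ((t * θ - τ) / σq)
  have : 0 < stdNormalCDF ((t * θ - τ) / σq) * (1 - stdNormalCDF ((t * θ - τ) / σq)) :=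
    mul_pos h3 (by linarith)
  positivity

lemma lgoD_le (t τ σq θ : ℝ) :
    lgoD t τ σq θ ≤ (t / σq) ^ 2 * (2 * Real.exp 1 * (Real.sqrt (2 * Real.pi))⁻¹) := by
  unfold lgoD
  rw [mul_div_assoc]
  exact mul_le_mul_of_nonneg_left (fisher_term_bound _) (sq_nonneg _)

lemma continuous_lgoD (t τ σq : ℝ) : Continuous fun θ => lgoD t τ σq θ := by
  unfold lgoD
  have hZ : Continuous fun θ : ℝ => (t * θ - τ) / σq := by fun_prop
  refine Continuous.div ?_ ?_ ?_
  · exact continuous_const.mul ((continuous_stdNormalPDF.comp hZ).pow 2)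
  · exact (continuous_stdNormalCDF.comp hZ).mul
      (continuous_const.sub (continuous_stdNormalCDF.comp hZ))
  · intro θ
    have h3 := stdNormalCDF_pos ((t * θ - τ) / σq)
    have h4 := stdNormalCDF_lt_one ((t * θ - τ) / σq)
    exact (mul_pos h3 (by linarith)).ne'

lemma sum_over_b {h t τ σa σq : ℝ} (hσa : 0 < σa) (hσq : 0 < σq) (θ xa : ℝ) :
    lgoScore h t τ σa σq θ xa 0 ^ 2 * lgoDensity h t τ σa σq θ xa 0
      + lgoScore h t τ σa σq θ xa 1 ^ 2 * lgoDensity h t τ σa σq θ xa 1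
      = lgoInner h t τ σa σq θ xa := by
  have hq := stdNormalCDF_pos ((t * θ - τ) / σq)
  have hq1 := stdNormalCDF_lt_one ((t * θ - τ) / σq)
  unfold lgoScore lgoDensity lgoInner lgoD
  simp only [Fin.val_zero, Fin.val_one, pow_zero, pow_one, Nat.cast_zero, Nat.cast_one,
    Nat.sub_zero, Nat.sub_self, mul_one, one_mul, zero_mul, add_zero, zero_add]
  revert hq hq1
  generalize stdNormalCDF ((t * θ - τ) / σq) = q
  generalize stdNormalPDF ((t * θ - τ) / σq) = w
  generalize stdNormalPDF ((xa - h * θ) / σa) = v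
  generalize stdNormalPDF θ = u
  intro hq hq1
  have h1q : (1:ℝ) - q ≠ 0 := ne_of_gt (by linarith)
  field_simp
  ring

lemma lgo_integrable_inner {h t τ σa σq : ℝ} (hσa : 0 < σa) (θ : ℝ) :
    Integrable (fun xa => lgoInner h t τ σa σq θ xa) := by
  have hpt : (fun xa => lgoInner h t τ σa σq θ xa)
      = fun xa => (fun u : ℝ =>
          (stdNormalPDF θ * σa⁻¹ * (θ ^ 2 + lgoD t τ σq θ)
            + stdNormalPDF θ * σa⁻¹ * (-2 * θ * (h / σa)) * u
            + stdNormalPDF θ * σa⁻¹ * (h / σa) ^ 2 * u ^ 2) * stdNormalPDF u)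
          ((xa - h * θ) / σa) := by
    funext xa
    unfold lgoInner
    ring
  rw [hpt]
  exact integrable_comp_affine (integrable_poly2_mul_stdNormalPDF _ _ _) (h * θ) hσa

lemma lgo_integral_inner {h t τ σa σq : ℝ} (hσa : 0 < σa) (θ : ℝ) :
    ∫ xa, lgoInner h t τ σa σq θ xa = lgoG h t τ σa σq θ := by
  have hpt : (fun xa => lgoInner h t τ σa σq θ xa)
      = fun xa => (fun u : ℝ =>
          (stdNormalPDF θ * σa⁻¹ * (θ ^ 2 + lgoD t τ σq θ)
            + stdNormalPDF θ * σa⁻¹ * (-2 * θ * (h / σa)) * u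
            + stdNormalPDF θ * σa⁻¹ * (h / σa) ^ 2 * u ^ 2) * stdNormalPDF u)
          ((xa - h * θ) / σa) := by
    funext xa
    unfold lgoInner
    ring
  rw [hpt, integral_comp_affine (integrable_poly2_mul_stdNormalPDF _ _ _) (h * θ) hσa,
    integral_poly2_mul_stdNormalPDF]
  unfold lgoG
  field_simp
  ring

lemma lgoG_nonneg {h t τ σa σq : ℝ} (θ : ℝ) : 0 ≤ lgoG h t τ σa σq θ := by
  unfold lgoG
  have := lgoD_nonneg t τ σq θ
  have h1 := stdNormalPDF_nonneg θ
  positivity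

lemma integrable_phi_mul_lgoD (t τ σq : ℝ) :
    Integrable fun θ => stdNormalPDF θ * lgoD t τ σq θ := by
  refine Integrable.mono'
    (integrable_stdNormalPDF.const_mul ((t / σq) ^ 2 * (2 * Real.exp 1 * (Real.sqrt (2 * Real.pi))⁻¹)))
    ((continuous_stdNormalPDF.mul (continuous_lgoD t τ σq)).aestronglyMeasurable)
    (Filter.Eventually.of_forall fun θ => ?_)
  rw [Real.norm_eq_abs, abs_of_nonneg (mul_nonneg (stdNormalPDF_nonneg θ) (lgoD_nonneg t τ σq θ)),
    mul_comm ((t / σq) ^ 2 * (2 * Real.exp 1 * (Real.sqrt (2 * Real.pi))⁻¹))]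
  exact mul_le_mul_of_nonneg_left (lgoD_le t τ σq θ) (stdNormalPDF_nonneg θ)

lemma lgoG_pt (h t τ σa σq θ : ℝ) :
    lgoG h t τ σa σq θ = θ ^ 2 * stdNormalPDF θ + (h ^ 2 / σa ^ 2) * stdNormalPDF θ
      + stdNormalPDF θ * lgoD t τ σq θ := by
  unfold lgoG; ring

lemma integrable_lgoG (h t τ σa σq : ℝ) : Integrable (lgoG h t τ σa σq) := by
  have : lgoG h t τ σa σq = fun θ => θ ^ 2 * stdNormalPDF θ
      + (h ^ 2 / σa ^ 2) * stdNormalPDF θ + stdNormalPDF θ * lgoD t τ σq θ :=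
    funext (lgoG_pt h t τ σa σq)
  rw [this]
  exact (integrable_sq_mul_stdNormalPDF.add
    (integrable_stdNormalPDF.const_mul _)).add (integrable_phi_mul_lgoD t τ σq)

lemma integral_lgoG (h t τ σa σq : ℝ) :
    ∫ θ, lgoG h t τ σa σq θ
      = 1 + h ^ 2 / σa ^ 2 + ∫ θ, stdNormalPDF θ * lgoD t τ σq θ := by
  have he : lgoG h t τ σa σq = fun θ => θ ^ 2 * stdNormalPDF θ
      + (h ^ 2 / σa ^ 2) * stdNormalPDF θ + stdNormalPDF θ * lgoD t τ σq θ :=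
    funext (lgoG_pt h t τ σa σq)
  rw [he, integral_add (show Integrable (fun θ : ℝ => θ ^ 2 * stdNormalPDF θ
        + (h ^ 2 / σa ^ 2) * stdNormalPDF θ) volume from
      integrable_sq_mul_stdNormalPDF.add (integrable_stdNormalPDF.const_mul _))
      (integrable_phi_mul_lgoD t τ σq),
    integral_add integrable_sq_mul_stdNormalPDF (integrable_stdNormalPDF.const_mul _),
    integral_sq_mul_stdNormalPDF, MeasureTheory.integral_const_mul, integral_stdNormalPDF]
  ring

lemma integral_gaussianReal_std (g : ℝ → ℝ) :
    ∫ x, g x ∂gaussianReal 0 1 = ∫ x, stdNormalPDF x * g x := by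
  rw [gaussianReal_of_var_ne_zero 0 one_ne_zero]
  have hpdf : gaussianPDF 0 1 = fun x => ((stdNormalPDF x).toNNReal : ℝ≥0∞) := by
    funext x
    simp only [gaussianPDF, ← stdNormalPDF_eq_gaussian]
    rfl
  rw [hpdf, integral_withDensity_eq_integral_smul measurable_stdNormalPDF.real_toNNReal g]
  congr 1
  funext x
  rw [NNReal.smul_def, Real.coe_toNNReal _ (stdNormalPDF_nonneg x), smul_eq_mul]

set_option maxHeartbeats 2000000 in
lemma lgoInner_nonneg {h t τ σa σq : ℝ} (hσa : 0 < σa) (θ xa : ℝ) :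
    0 ≤ lgoInner h t τ σa σq θ xa := by
  unfold lgoInner
  exact mul_nonneg (mul_nonneg (stdNormalPDF_nonneg θ)
    (mul_nonneg (inv_nonneg.2 hσa.le) (stdNormalPDF_nonneg _)))
    (add_nonneg (sq_nonneg _) (lgoD_nonneg t τ σq θ))

set_option maxHeartbeats 2000000 in
/-- Bayesian Fisher information of the scalar LGO model (Eq. (fim_LGO), real
scalar case `M = 1`): `J = 1 + h²/σ_a² + (t²/σ_q²) · E[φ(Z)²/(Φ(Z)Φ(−Z))]`,
where `Z = (tθ − τ)/σ_q` and the expectation is over `θ ~ N(0,1)`. -/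
theorem lgo_bayesian_fisher_information
    (h t τ σa σq : ℝ) (hσa : 0 < σa) (hσq : 0 < σq) :
    ∫ p : ℝ × ℝ × Fin 2,
        (deriv (fun s : ℝ => Real.log (lgoDensity h t τ σa σq s p.2.1 p.2.2)) p.1) ^ 2 *
          lgoDensity h t τ σa σq p.1 p.2.1 p.2.2
        ∂(Measure.prod volume (Measure.prod volume (Measure.count : Measure (Fin 2))))
      = 1 + h ^ 2 / σa ^ 2 +
          t ^ 2 / σq ^ 2 *
            ∫ θ, stdNormalPDF ((t * θ - τ) / σq) ^ 2 /
                (stdNormalCDF ((t * θ - τ) / σq) * stdNormalCDF (-((t * θ - τ) / σq)))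
              ∂(gaussianReal 0 1) := by
  simp only [score_deriv_eq hσa hσq]
  have hFmeas : Measurable (fun p : ℝ × ℝ × Fin 2 =>
      lgoScore h t τ σa σq p.1 p.2.1 p.2.2 ^ 2 * lgoDensity h t τ σa σq p.1 p.2.1 p.2.2) :=
    measurable_F h t τ σa σq
  have hFnn : ∀ p : ℝ × ℝ × Fin 2, 0 ≤ lgoScore h t τ σa σq p.1 p.2.1 p.2.2 ^ 2 *
      lgoDensity h t τ σa σq p.1 p.2.1 p.2.2 :=
    fun p => mul_nonneg (sq_nonneg _) (lgoDensity_pos hσa _ _ _).le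
  rw [integral_eq_lintegral_of_nonneg_ae (Filter.Eventually.of_forall hFnn)
    hFmeas.aestronglyMeasurable]
  have key : (∫⁻ p : ℝ × ℝ × Fin 2, ENNReal.ofReal
      (lgoScore h t τ σa σq p.1 p.2.1 p.2.2 ^ 2 * lgoDensity h t τ σa σq p.1 p.2.1 p.2.2)
      ∂(Measure.prod volume (Measure.prod volume (Measure.count : Measure (Fin 2)))))
      = ENNReal.ofReal (∫ θ, lgoG h t τ σa σq θ) := by
    refine (lintegral_prod _ hFmeas.ennreal_ofReal.aemeasurable).trans ?_
    have hθsec : ∀ θ : ℝ, (∫⁻ y : ℝ × Fin 2, ENNReal.ofReal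
        (lgoScore h t τ σa σq θ y.1 y.2 ^ 2 * lgoDensity h t τ σa σq θ y.1 y.2)
        ∂((volume : Measure ℝ).prod (Measure.count : Measure (Fin 2))))
        = ENNReal.ofReal (lgoG h t τ σa σq θ) := by
      intro θ
      have hsecmeas : Measurable (fun y : ℝ × Fin 2 => ENNReal.ofReal
          (lgoScore h t τ σa σq θ y.1 y.2 ^ 2 * lgoDensity h t τ σa σq θ y.1 y.2)) :=
        (hFmeas.ennreal_ofReal).comp measurable_prodMk_left
      refine (lintegral_prod _ hsecmeas.aemeasurable).trans ?_
      have hxa : ∀ xa : ℝ, (∫⁻ b : Fin 2, ENNReal.ofReal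
          (lgoScore h t τ σa σq θ xa b ^ 2 * lgoDensity h t τ σa σq θ xa b)
          ∂(Measure.count : Measure (Fin 2)))
          = ENNReal.ofReal (lgoInner h t τ σa σq θ xa) := by
        intro xa
        rw [lintegral_fintype, Fin.sum_univ_two, Measure.count_singleton,
          Measure.count_singleton, mul_one, mul_one, ← ENNReal.ofReal_add
          (mul_nonneg (sq_nonneg _) (lgoDensity_pos hσa _ _ _).le)
          (mul_nonneg (sq_nonneg _) (lgoDensity_pos hσa _ _ _).le),
          sum_over_b hσa hσq θ xa]
      refine (lintegral_congr fun xa => hxa xa).trans ?_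
      rw [← ofReal_integral_eq_lintegral_ofReal (lgo_integrable_inner hσa θ)
        (Filter.Eventually.of_forall fun xa => lgoInner_nonneg hσa θ xa),
        lgo_integral_inner hσa θ]
    refine (lintegral_congr fun θ => hθsec θ).trans ?_
    rw [← ofReal_integral_eq_lintegral_ofReal (integrable_lgoG h t τ σa σq)
      (Filter.Eventually.of_forall fun θ => lgoG_nonneg θ)]
  rw [key, ENNReal.toReal_ofReal (integral_nonneg fun θ => lgoG_nonneg θ),
    integral_lgoG]
  have hpt : ∀ θ : ℝ, stdNormalPDF θ * lgoD t τ σq θ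
      = (t ^ 2 / σq ^ 2) * (stdNormalPDF θ * (stdNormalPDF ((t * θ - τ) / σq) ^ 2 /
          (stdNormalCDF ((t * θ - τ) / σq) * stdNormalCDF (-((t * θ - τ) / σq))))) := by
    intro θ
    rw [stdNormalCDF_neg]
    unfold lgoD
    ring
  rw [integral_gaussianReal_std]
  simp_rw [hpt]
  rw [MeasureTheory.integral_const_mul]
end
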